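/- arXiv:2012.08718 — 2 statements merged into one kernel-verified Lean document; each statement's English description precedes it below -/
import Mathlib

section
/- Key slope lemma of Appendix A: define h_δ(τ,b) := V_δ(τ, b+k−1) − V_δ(τ, b). Then for all integers τ ≥ 1, b ≥ 0 and all reals δ₁ ≤ δ₂, one has h_{δ₂}(τ,b) − h_{δ₁}(τ,b) ≥ −(δ₂ − δ₁) (i.e. the 'derivative' of h with respect to the subsidy is at least −1). -/
noncomputable def F (α : ℝ) (x : ℕ) : ℝ := α * (x : ℝ) ^ 2

noncomputable def V (k : ℕ) (E α β δ : ℝ) : ℕ → ℕ → ℝ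
  | 0, _ => 0
  | 1, 0 => max δ 0
  | 1, b + 1 => max (δ - F α b) (E - F α (b + 1 - k))
  | t + 2, b =>
      max (δ + β * V k E α β δ (t + 1) (b - 1))
        ((if 1 ≤ b then E else 0) + β * V k E α β δ (t + 1) (b - k))

noncomputable def g (k : ℕ) (E α β δ : ℝ) : ℕ → ℕ → ℝ
  | 0, _ => 0
  | 1, 0 => δ
  | 1, b + 1 => δ - F α b - E + F α (b + 1 - k)
  | t + 2, b =>
      δ + β * V k E α β δ (t + 1) (b - 1) - (if 1 ≤ b then E else 0)
        - β * V k E α β δ (t + 1) (b - k)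

noncomputable def whittle (k : ℕ) (E α β : ℝ) (τ b : ℕ) : ℝ :=
  sInf {δ : ℝ | 0 ≤ g k E α β δ τ b}

private lemma V_step (k : ℕ) (E α β δ : ℝ) (t b : ℕ) :
    V k E α β δ (t + 2) b = max (δ + β * V k E α β δ (t + 1) (b - 1))
      ((if 1 ≤ b then E else 0) + β * V k E α β δ (t + 1) (b - k)) := rfl

/-- scale a `D`-difference inequality by `β ∈ [0,1]`. -/
private lemma sc {β Δ a b c d : ℝ} (hβ0 : 0 ≤ β) (hβ1 : β ≤ 1) (hΔ : 0 ≤ Δ)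
    (h : a - b - (c - d) ≥ -Δ) :
    β * a - β * b - (β * c - β * d) ≥ -Δ := by
  have h1 : β * (-Δ) ≤ β * (a - b - (c - d)) :=
    mul_le_mul_of_nonneg_left (by linarith) hβ0
  nlinarith

/-- at horizon 1, `0 ≤ V δ₂ - V δ₁ ≤ δ₂ - δ₁`. -/
private lemma D_one (k : ℕ) (E α β δ₁ δ₂ : ℝ) (hδ : δ₁ ≤ δ₂) (b : ℕ) :
    V k E α β δ₁ 1 b ≤ V k E α β δ₂ 1 b ∧
      V k E α β δ₂ 1 b ≤ V k E α β δ₁ 1 b + (δ₂ - δ₁) := by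
  cases b with
  | zero =>
    show max δ₁ 0 ≤ max δ₂ 0 ∧ max δ₂ 0 ≤ max δ₁ 0 + (δ₂ - δ₁)
    constructor
    · exact max_le_max hδ le_rfl
    · apply max_le
      · linarith [le_max_left δ₁ (0:ℝ)]
      · linarith [le_max_right δ₁ (0:ℝ)]
  | succ n =>
    show max (δ₁ - F α n) (E - F α (n + 1 - k)) ≤ max (δ₂ - F α n) (E - F α (n + 1 - k)) ∧
      max (δ₂ - F α n) (E - F α (n + 1 - k)) ≤
        max (δ₁ - F α n) (E - F α (n + 1 - k)) + (δ₂ - δ₁)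
    constructor
    · exact max_le_max (by linarith) le_rfl
    · apply max_le
      · linarith [le_max_left (δ₁ - F α n) (E - F α (n + 1 - k))]
      · linarith [le_max_right (δ₁ - F α n) (E - F α (n + 1 - k))]

private lemma key (k : ℕ) (hk : 1 ≤ k) (E α β : ℝ) (hE : 0 ≤ E)
    (hβ0 : 0 ≤ β) (hβ1 : β ≤ 1) (δ₁ δ₂ : ℝ) (hδ : δ₁ ≤ δ₂) (τ : ℕ) :
    (∀ b, V k E α β δ₂ τ (b + k - 1) - V k E α β δ₂ τ b
        - (V k E α β δ₁ τ (b + k - 1) - V k E α β δ₁ τ b) ≥ -(δ₂ - δ₁)) ∧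
    (∀ m, m ≤ k - 1 → V k E α β δ₂ τ m - V k E α β δ₂ τ 0
        - (V k E α β δ₁ τ m - V k E α β δ₁ τ 0) ≥ -(δ₂ - δ₁)) := by
  have hΔ : (0:ℝ) ≤ δ₂ - δ₁ := by linarith
  induction τ with
  | zero =>
    have h0 : ∀ δ b, V k E α β δ 0 b = 0 := fun _ _ => rfl
    constructor <;> intro b <;> [skip; intro _] <;> rw [h0, h0, h0, h0] <;> linarith
  | succ t ih =>
    rcases t with _ | s
    · -- τ = 1
      constructor
      · intro b
        obtain ⟨l1, u1⟩ := D_one k E α β δ₁ δ₂ hδ b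
        obtain ⟨l2, u2⟩ := D_one k E α β δ₁ δ₂ hδ (b + k - 1)
        linarith
      · intro m _
        obtain ⟨l1, u1⟩ := D_one k E α β δ₁ δ₂ hδ 0
        obtain ⟨l2, u2⟩ := D_one k E α β δ₁ δ₂ hδ m
        linarith
    · -- τ = s + 2, with ih at s + 1
      obtain ⟨hS, hZ⟩ := ih
      -- Z part first
      have Z2 : ∀ m, m ≤ k - 1 → V k E α β δ₂ (s+2) m - V k E α β δ₂ (s+2) 0
          - (V k E α β δ₁ (s+2) m - V k E α β δ₁ (s+2) 0) ≥ -(δ₂ - δ₁) := by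
        intro m hm
        have hmk : m - k = 0 := by omega
        have FZ := sc hβ0 hβ1 hΔ (hZ (m - 1) (by omega))
        have E20 : V k E α β δ₂ (s+2) 0
            = max (δ₂ + β * V k E α β δ₂ (s+1) 0) (β * V k E α β δ₂ (s+1) 0) := by
          rw [V_step]; norm_num
        have E1m : V k E α β δ₁ (s+2) m
            = max (δ₁ + β * V k E α β δ₁ (s+1) (m - 1))
                ((if 1 ≤ m then E else 0) + β * V k E α β δ₁ (s+1) 0) := by
          rw [V_step, hmk]
        have P2a : δ₂ + β * V k E α β δ₂ (s+1) (m - 1) ≤ V k E α β δ₂ (s+2) m := by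
          rw [V_step]; exact le_max_left _ _
        have P2b : (if 1 ≤ m then E else 0) + β * V k E α β δ₂ (s+1) 0
            ≤ V k E α β δ₂ (s+2) m := by
          rw [V_step, hmk]; exact le_max_right _ _
        have P1a : δ₁ + β * V k E α β δ₁ (s+1) 0 ≤ V k E α β δ₁ (s+2) 0 := by
          rw [V_step]; norm_num
        have P1b : β * V k E α β δ₁ (s+1) 0 ≤ V k E α β δ₁ (s+2) 0 := by
          rw [V_step]; norm_num
        rcases max_cases (δ₂ + β * V k E α β δ₂ (s+1) 0) (β * V k E α β δ₂ (s+1) 0) with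
          ⟨h2, _⟩ | ⟨h2, _⟩ <;>
          rw [h2] at E20 <;>
          (rcases max_cases (δ₁ + β * V k E α β δ₁ (s+1) (m - 1))
              ((if 1 ≤ m then E else 0) + β * V k E α β δ₁ (s+1) 0) with
            ⟨h1, _⟩ | ⟨h1, _⟩ <;> rw [h1] at E1m) <;>
          rw [E20, E1m] <;> linarith [FZ, P2a, P2b, P1a, P1b]
      refine ⟨?_, Z2⟩
      intro b
      rcases Nat.eq_zero_or_pos b with hb0 | hb1
      · subst hb0
        simpa using Z2 (0 + k - 1) (by omega)
      · -- b ≥ 1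
        have hb : 1 ≤ b := hb1
        have h1' : b + k - 1 - 1 = b - 1 + k - 1 := by omega
        have h2' : b + k - 1 - k = b - 1 := by omega
        have he' : 1 ≤ b + k - 1 := by omega
        have F1 := sc hβ0 hβ1 hΔ (hS (b - 1))
        have F2 : β * V k E α β δ₂ (s+1) (b - 1) - β * V k E α β δ₂ (s+1) (b - k)
            - (β * V k E α β δ₁ (s+1) (b - 1) - β * V k E α β δ₁ (s+1) (b - k))
            ≥ -(δ₂ - δ₁) := by
          rcases le_or_gt k b with h | h
          · have hx := hS (b - k)
            rw [show b - k + k - 1 = b - 1 from by omega] at hx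
            exact sc hβ0 hβ1 hΔ hx
          · have hbk : b - k = 0 := by omega
            rw [hbk]
            exact sc hβ0 hβ1 hΔ (hZ (b - 1) (by omega))
        have E2b : V k E α β δ₂ (s+2) b
            = max (δ₂ + β * V k E α β δ₂ (s+1) (b - 1))
                (E + β * V k E α β δ₂ (s+1) (b - k)) := by
          rw [V_step, if_pos hb]
        have E1b' : V k E α β δ₁ (s+2) (b + k - 1)
            = max (δ₁ + β * V k E α β δ₁ (s+1) (b - 1 + k - 1))
                (E + β * V k E α β δ₁ (s+1) (b - 1)) := by
          rw [V_step, if_pos he', h1', h2']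
        have P2a : δ₂ + β * V k E α β δ₂ (s+1) (b - 1 + k - 1)
            ≤ V k E α β δ₂ (s+2) (b + k - 1) := by
          rw [V_step, h1']; exact le_max_left _ _
        have P2b : E + β * V k E α β δ₂ (s+1) (b - 1)
            ≤ V k E α β δ₂ (s+2) (b + k - 1) := by
          rw [V_step, if_pos he', h2']; exact le_max_right _ _
        have P1a : δ₁ + β * V k E α β δ₁ (s+1) (b - 1) ≤ V k E α β δ₁ (s+2) b := by
          rw [V_step]; exact le_max_left _ _
        have P1b : E + β * V k E α β δ₁ (s+1) (b - k) ≤ V k E α β δ₁ (s+2) b := by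
          rw [V_step, if_pos hb]; exact le_max_right _ _
        rcases max_cases (δ₂ + β * V k E α β δ₂ (s+1) (b - 1))
            (E + β * V k E α β δ₂ (s+1) (b - k)) with ⟨h2, _⟩ | ⟨h2, _⟩ <;>
          rw [h2] at E2b <;>
          (rcases max_cases (δ₁ + β * V k E α β δ₁ (s+1) (b - 1 + k - 1))
              (E + β * V k E α β δ₁ (s+1) (b - 1)) with ⟨h1, _⟩ | ⟨h1, _⟩ <;>
            rw [h1] at E1b') <;>
          rw [E2b, E1b'] <;> linarith [F1, F2, P2a, P2b, P1a, P1b]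

theorem h_slope_ge_neg_one (k : ℕ) (hk : 1 ≤ k) (E α β : ℝ) (hE : 0 ≤ E) (hα : 0 < α)
    (hβ0 : 0 < β) (hβ1 : β < 1)
    (τ b : ℕ) (hτ : 1 ≤ τ) (δ₁ δ₂ : ℝ) (hδ : δ₁ ≤ δ₂) :
    (V k E α β δ₂ τ (b + k - 1) - V k E α β δ₂ τ b)
      - (V k E α β δ₁ τ (b + k - 1) - V k E α β δ₁ τ b) ≥ -(δ₂ - δ₁) := by
  exact (key k hk E α β hE hβ0.le hβ1.le δ₁ δ₂ hδ τ).1 b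
end

section
/- Whittle index of just-finishable urgent states (Theorem 2, third case): for every integer τ ≥ 1 and every integer b with k·τ − k + 2 ≤ b ≤ k·τ (the task can be finished only by offloading in every remaining slot), the Whittle index is ω(τ,b) = E + β^{τ−1}·α·(b − k·τ + k − 1)². -/
noncomputable def Sg (β : ℝ) (t : ℕ) : ℝ := ∑ i ∈ Finset.range t, β ^ i
lemma Sg_zero (β : ℝ) : Sg β 0 = 0 := by simp [Sg]
lemma Sg_one (β : ℝ) : Sg β 1 = 1 := by simp [Sg]
lemma Sg_succ (β : ℝ) (t : ℕ) : Sg β (t+1) = 1 + β * Sg β t := by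
  rw [Sg, Sg, geom_sum_succ]; ring
lemma Sg_nonneg {β : ℝ} (hβ : 0 ≤ β) (t : ℕ) : 0 ≤ Sg β t :=
  Finset.sum_nonneg fun i _ => pow_nonneg hβ i
lemma Sg_le {β : ℝ} (hβ0 : 0 ≤ β) (hβ1 : β ≤ 1) (t : ℕ) : Sg β t ≤ t := by
  induction t with
  | zero => simp [Sg_zero]
  | succ n ih =>
    rw [Sg_succ]; push_cast
    have h1 : β * Sg β n ≤ Sg β n := by nlinarith [Sg_nonneg hβ0 n]
    linarith
def rho (k d j : ℕ) : ℕ := match j with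
  | 0 => d + 1 - k
  | j + 1 => d + j * (k - 1)
lemma rho_shift (k d : ℕ) (hk : 1 ≤ k) (j : ℕ) :
    rho k (d + k - 1) j = rho k d (j+1) := by
  cases j with
  | zero => simp [rho]; omega
  | succ i => simp only [rho, Nat.succ_mul]; omega
lemma V_one (k : ℕ) (E α β δ : ℝ) (b : ℕ) :
    V k E α β δ 1 (b+1) = max (δ - F α b) (E - F α (b + 1 - k)) := rfl
lemma V_succ (k : ℕ) (E α β δ : ℝ) (t b : ℕ) :
    V k E α β δ (t+2) b = max (δ + β * V k E α β δ (t + 1) (b - 1))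
        ((if 1 ≤ b then E else 0) + β * V k E α β δ (t + 1) (b - k)) := rfl

-- L5 : policy lower bound (j passive slots first, then all-active)
lemma L5 (k : ℕ) (hk : 1 ≤ k) (E α β δ : ℝ) (hβ0 : 0 ≤ β) :
    ∀ s d j : ℕ, 1 ≤ d → j ≤ s + 1 →
      E * Sg β (s+1) + (δ - E) * Sg β j - β ^ s * α * (rho k d j : ℝ) ^ 2
        ≤ V k E α β δ (s+1) (k*s+1+d) := by
  intro s
  induction s with
  | zero =>
    intro d j hd hj
    have hx : k*0+1+d = d+1 := by omega
    rw [hx, V_one]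
    interval_cases j
    · refine le_trans (le_of_eq ?_) (le_max_right _ _)
      simp only [Sg_succ, Sg_zero, rho, F, pow_zero]
      ring
    · refine le_trans (le_of_eq ?_) (le_max_left _ _)
      have hr : rho k d 1 = d := by simp [rho]
      rw [hr]
      simp only [Sg_succ, Sg_zero, F, pow_zero]
      ring
  | succ s ih =>
    intro d j hd hj
    have hx1 : k*(s+1)+1+d - 1 = k*s+1+(d+k-1) := by
      have h : k*(s+1) = k*s+k := by ring
      omega
    have hxk : k*(s+1)+1+d - k = k*s+1+d := by
      have h : k*(s+1) = k*s+k := by ring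
      omega
    rw [V_succ, hx1, hxk, if_pos (by omega : 1 ≤ k*(s+1)+1+d)]
    cases j with
    | zero =>
      refine le_trans ?_ (le_max_right _ _)
      have h2 := ih d 0 hd (by omega)
      calc E * Sg β (s+1+1) + (δ - E) * Sg β 0 - β ^ (s+1) * α * (rho k d 0 : ℝ) ^ 2
          = E + β * (E * Sg β (s+1) + (δ - E) * Sg β 0 - β ^ s * α * (rho k d 0 : ℝ) ^ 2) := by
            rw [Sg_succ, Sg_zero, pow_succ]; ring
        _ ≤ E + β * V k E α β δ (s+1) (k*s+1+d) := by
            have := mul_le_mul_of_nonneg_left h2 hβ0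
            linarith
    | succ j' =>
      refine le_trans ?_ (le_max_left _ _)
      have h2 := ih (d+k-1) j' (by omega) (by omega)
      rw [rho_shift k d hk j'] at h2
      calc E * Sg β (s+1+1) + (δ - E) * Sg β (j'+1) - β ^ (s+1) * α * (rho k d (j'+1) : ℝ) ^ 2
          = δ + β * (E * Sg β (s+1) + (δ - E) * Sg β j' - β ^ s * α * (rho k d (j'+1) : ℝ) ^ 2) := by
            rw [Sg_succ β (s+1), Sg_succ β j', pow_succ]; ring
        _ ≤ δ + β * V k E α β δ (s+1) (k*s+1+(d+k-1)) := by
            have := mul_le_mul_of_nonneg_left h2 hβ0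
            linarith

-- L3 : existential upper bound over number of passive slots
lemma L3 (k : ℕ) (hk : 1 ≤ k) (E α β δ : ℝ) (hδ : E ≤ δ) (hβ0 : 0 ≤ β) (hβ1 : β ≤ 1) :
    ∀ s d : ℕ, 1 ≤ d →
      ∃ j ≤ s + 1, V k E α β δ (s+1) (k*s+1+d)
        ≤ E * Sg β (s+1) + (δ - E) * Sg β j - β ^ s * α * (rho k d j : ℝ) ^ 2 := by
  intro s
  induction s with
  | zero =>
    intro d hd
    have hx : k*0+1+d = d+1 := by omega
    rw [hx, V_one]
    rcases le_total (δ - F α d) (E - F α (d+1-k)) with h | h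
    · refine ⟨0, by omega, ?_⟩
      have he : E * Sg β (0+1) + (δ - E) * Sg β 0 - β ^ 0 * α * (rho k d 0 : ℝ) ^ 2
          = E - F α (d+1-k) := by
        simp only [Sg_succ, Sg_zero, rho, F, pow_zero]; ring
      rw [he]
      exact max_le h le_rfl
    · refine ⟨1, by omega, ?_⟩
      have hr : rho k d 1 = d := by simp [rho]
      have he : E * Sg β (0+1) + (δ - E) * Sg β 1 - β ^ 0 * α * (rho k d 1 : ℝ) ^ 2
          = δ - F α d := by
        rw [hr]; simp only [Sg_succ, Sg_zero, F, pow_zero]; ring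
      rw [he]
      exact max_le le_rfl h
  | succ s ih =>
    intro d hd
    obtain ⟨jP, hjP, hP⟩ := ih (d+k-1) (by omega)
    obtain ⟨jA, hjA, hA⟩ := ih d hd
    rw [rho_shift k d hk jP] at hP
    have hx1 : k*(s+1)+1+d - 1 = k*s+1+(d+k-1) := by
      have h : k*(s+1) = k*s+k := by ring
      omega
    have hxk : k*(s+1)+1+d - k = k*s+1+d := by
      have h : k*(s+1) = k*s+k := by ring
      omega
    have hVe : V k E α β δ (s+1+1) (k*(s+1)+1+d)
        = max (δ + β * V k E α β δ (s+1) (k*s+1+(d+k-1)))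
            (E + β * V k E α β δ (s+1) (k*s+1+d)) := by
      rw [V_succ, hx1, hxk, if_pos (by omega : 1 ≤ k*(s+1)+1+d)]
    set BP : ℝ := E * Sg β (s+1+1) + (δ - E) * Sg β (jP+1)
        - β ^ (s+1) * α * (rho k d (jP+1) : ℝ) ^ 2 with hBP
    set BA : ℝ := E * Sg β (s+1+1) + (δ - E) * Sg β jA
        - β ^ (s+1) * α * (rho k d jA : ℝ) ^ 2 with hBA
    have hPB : δ + β * V k E α β δ (s+1) (k*s+1+(d+k-1)) ≤ BP := by
      have h1 := mul_le_mul_of_nonneg_left hP hβ0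
      rw [hBP, Sg_succ β (s+1), Sg_succ β jP, pow_succ]
      nlinarith [h1]
    have hAB : E + β * V k E α β δ (s+1) (k*s+1+d) ≤ BA := by
      have h1 := mul_le_mul_of_nonneg_left hA hβ0
      have h2 : (δ - E) * (β * Sg β jA) ≤ (δ - E) * Sg β jA := by
        have : β * Sg β jA ≤ Sg β jA := by nlinarith [Sg_nonneg hβ0 jA]
        nlinarith
      rw [hBA, Sg_succ β (s+1), pow_succ]
      nlinarith [h1, h2]
    rcases le_total BP BA with h | h
    · exact ⟨jA, by omega, by rw [hVe]; exact le_trans (max_le (le_trans hPB h) hAB) le_rfl⟩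
    · exact ⟨jP+1, by omega, by rw [hVe]; exact max_le hPB (le_trans hAB h)⟩

lemma F_mono {α : ℝ} (hα : 0 ≤ α) {m n : ℕ} (h : m ≤ n) : F α m ≤ F α n := by
  unfold F
  have hc : (m:ℝ) ≤ (n:ℝ) := by exact_mod_cast h
  have hm : (0:ℝ) ≤ m := Nat.cast_nonneg m
  exact mul_le_mul_of_nonneg_left (pow_le_pow_left₀ hm hc 2) hα

-- monotonicity in b on the safe region
lemma Vmono (k : ℕ) (hk : 1 ≤ k) (E α β δ : ℝ) (hα : 0 ≤ α) (hβ0 : 0 ≤ β) :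
    ∀ s x x' : ℕ, k*s+2 ≤ x → x ≤ x' → V k E α β δ (s+1) x' ≤ V k E α β δ (s+1) x := by
  intro s
  induction s with
  | zero =>
    intro x x' hx hxx
    obtain ⟨b, rfl⟩ : ∃ b, x = b + 1 := ⟨x - 1, by omega⟩
    obtain ⟨b', rfl⟩ : ∃ b', x' = b' + 1 := ⟨x' - 1, by omega⟩
    rw [V_one, V_one]
    apply max_le_max
    · have := F_mono hα (show b ≤ b' by omega)
      linarith
    · have := F_mono hα (show b+1-k ≤ b'+1-k by omega)
      linarith
  | succ s ih =>
    intro x x' hx hxx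
    rw [V_succ, V_succ, if_pos (by omega : 1 ≤ x), if_pos (by omega : 1 ≤ x')]
    have hks : k*(s+1) = k*s+k := by ring
    apply max_le_max
    · have h1 := ih (x-1) (x'-1) (by omega) (by omega)
      have := mul_le_mul_of_nonneg_left h1 hβ0
      linarith
    · have h1 := ih (x-k) (x'-k) (by omega) (by omega)
      have := mul_le_mul_of_nonneg_left h1 hβ0
      linarith

lemma rho_lb (k cN i : ℕ) (hck : cN ≤ k-1) : cN*(i+1) ≤ rho k cN (i+1) := by
  have h1 : cN*i ≤ (k-1)*i := Nat.mul_le_mul_right i hck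
  have h2 : i*(k-1) = (k-1)*i := Nat.mul_comm i (k-1)
  simp only [rho, Nat.mul_succ]
  omega

lemma term_le (k cN : ℕ) (hc1 : 1 ≤ cN) (hck : cN ≤ k-1) (α β : ℝ) (hα : 0 ≤ α)
    (hβ0 : 0 ≤ β) (hβ1 : β ≤ 1) (s j : ℕ) :
    (β^(s+1)*α*(cN:ℝ)^2) * Sg β j ≤ β ^ s * α * (rho k cN j : ℝ) ^ 2 := by
  cases j with
  | zero =>
    rw [Sg_zero]
    have : (0:ℝ) ≤ β ^ s * α * (rho k cN 0 : ℝ) ^ 2 := by positivity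
    linarith
  | succ i =>
    have A0 : (0:ℝ) ≤ β^s*α := mul_nonneg (pow_nonneg hβ0 s) hα
    have c1 : (0:ℝ) ≤ (cN:ℝ) := Nat.cast_nonneg cN
    have hr : ((cN:ℝ)) * ((i:ℝ)+1) ≤ (rho k cN (i+1) : ℝ) := by
      have := rho_lb k cN i hck
      have h2 : ((cN*(i+1) : ℕ) : ℝ) ≤ ((rho k cN (i+1) : ℕ) : ℝ) := by exact_mod_cast this
      push_cast at h2
      linarith
    have key : β * Sg β (i+1) * (cN:ℝ)^2 ≤ (rho k cN (i+1) : ℝ)^2 := by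
      have h1 : Sg β (i+1) ≤ ((i:ℝ)+1) := by
        have := Sg_le hβ0 hβ1 (i+1); push_cast at this; linarith
      have h2 : (0:ℝ) ≤ Sg β (i+1) := Sg_nonneg hβ0 _
      have h3 : (1:ℝ) ≤ (i:ℝ)+1 := by
        have : (0:ℝ) ≤ (i:ℝ) := Nat.cast_nonneg i
        linarith
      have s1 : β * Sg β (i+1) ≤ (i:ℝ)+1 := by nlinarith
      have s2 : β * Sg β (i+1) * (cN:ℝ)^2 ≤ ((i:ℝ)+1)*(cN:ℝ)^2 :=
        mul_le_mul_of_nonneg_right s1 (sq_nonneg _)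
      have s3 : ((i:ℝ)+1)*(cN:ℝ)^2 ≤ ((cN:ℝ)*((i:ℝ)+1))^2 := by nlinarith [sq_nonneg ((cN:ℝ))]
      have s4 : ((cN:ℝ)*((i:ℝ)+1))^2 ≤ (rho k cN (i+1) : ℝ)^2 :=
        pow_le_pow_left₀ (mul_nonneg c1 (by linarith)) hr 2
      linarith
    calc (β^(s+1)*α*(cN:ℝ)^2) * Sg β (i+1)
        = (β^s*α) * (β * Sg β (i+1) * (cN:ℝ)^2) := by rw [pow_succ]; ring
      _ ≤ (β^s*α) * (rho k cN (i+1) : ℝ)^2 := mul_le_mul_of_nonneg_left key A0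
      _ = β ^ s * α * (rho k cN (i+1) : ℝ) ^ 2 := by ring

lemma gapN (k cN : ℕ) (hk : 1 ≤ k) (hc1 : 1 ≤ cN) (hck : cN ≤ k-1) (j : ℕ) :
    rho k cN j ^ 2 + cN ^ 2 ≤ rho k (cN + k - 1) j ^ 2 := by
  cases j with
  | zero =>
    have e1 : rho k cN 0 = 0 := by simp only [rho]; omega
    have e2 : rho k (cN+k-1) 0 = cN := by simp only [rho]; omega
    rw [e1, e2]; simp
  | succ i =>
    have e1 : rho k cN (i+1) = cN + i*(k-1) := rfl
    have e2 : rho k (cN+k-1) (i+1) = cN + i*(k-1) + (k-1) := by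
      simp only [rho]; omega
    rw [e1, e2]
    have haa : cN ≤ cN + i*(k-1) := Nat.le_add_right _ _
    nlinarith [Nat.mul_le_mul haa hck]

lemma g_one (k : ℕ) (E α β δ : ℝ) (b : ℕ) :
    g k E α β δ 1 (b+1) = δ - F α b - E + F α (b + 1 - k) := rfl

lemma g_succ (k : ℕ) (E α β δ : ℝ) (t b : ℕ) :
    g k E α β δ (t+2) b = δ + β * V k E α β δ (t + 1) (b - 1) - (if 1 ≤ b then E else 0)
        - β * V k E α β δ (t + 1) (b - k) := rfl

theorem whittle_urgent (k : ℕ) (hk : 1 ≤ k) (E α β : ℝ) (hE : 0 ≤ E) (hα : 0 < α)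
    (hβ0 : 0 < β) (hβ1 : β < 1)
    (τ b : ℕ) (hτ : 1 ≤ τ) (hb1 : k * τ - k + 2 ≤ b) (hb2 : b ≤ k * τ) :
    whittle k E α β τ b = E + β ^ (τ - 1) * α * ((b : ℝ) - k * τ + k - 1) ^ 2 := by
  have hβ0' : (0:ℝ) ≤ β := le_of_lt hβ0
  have hβ1' : β ≤ 1 := le_of_lt hβ1
  have hα' : (0:ℝ) ≤ α := le_of_lt hα
  have hk2 : 2 ≤ k := by
    have := le_trans hb1 hb2
    omega
  unfold whittle
  match τ, hτ with
  | 1, _ =>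
    -- τ = 1 case
    have hb2' : b ≤ k := by have : k*1 = k := by ring
                            omega
    have hbge : 2 ≤ b := by have : k*1 = k := by ring
                            omega
    obtain ⟨b', rfl⟩ : ∃ b', b = b' + 1 := ⟨b - 1, by omega⟩
    have hset : {δ : ℝ | 0 ≤ g k E α β δ 1 (b'+1)} = {δ : ℝ | 0 ≤ δ - α * (b':ℝ)^2 - E} := by
      ext δ
      simp only [Set.mem_setOf_eq, g_one]
      have hz : b' + 1 - k = 0 := by omega
      rw [hz]
      simp only [F]
      push_cast
      constructor <;> intro h <;> linarith
    rw [hset]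
    have hls : IsLeast {δ : ℝ | 0 ≤ δ - α * (b':ℝ)^2 - E} (E + α * (b':ℝ)^2) := by
      constructor
      · simp only [Set.mem_setOf_eq]; linarith
      · intro δ hδ
        simp only [Set.mem_setOf_eq] at hδ
        linarith
    rw [hls.csInf_eq]
    have hc : ((b':ℝ)) = ((b'+1:ℕ):ℝ) - (k:ℝ) * ((1:ℕ):ℝ) + (k:ℝ) - 1 := by
      push_cast; ring
    rw [show ((1:ℕ) - 1) = 0 from rfl]
    rw [← hc]
    ring
  | (s+2), _ =>
    -- τ = s + 2
    have hks2 : k*(s+2) = k*s + 2*k := by ring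
    have hc1 : 1 ≤ b - (k*s + k + 1) := by omega
    have hck : b - (k*s + k + 1) ≤ k - 1 := by omega
    set cN : ℕ := b - (k*s + k + 1) with hcN
    have hbN : b = k*s + k + 1 + cN := by omega
    have hb1' : b - 1 = k*s+1+(cN + k - 1) := by omega
    have hbk' : b - k = k*s+1+cN := by omega
    set δs : ℝ := E + β^(s+1) * α * (cN:ℝ)^2 with hδs
    have hδsE : E ≤ δs := by
      have : (0:ℝ) ≤ β^(s+1) * α * (cN:ℝ)^2 := by positivity
      linarith
    have hgrw : ∀ δ : ℝ, g k E α β δ (s+2) b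
        = δ + β * V k E α β δ (s+1) (k*s+1+(cN+k-1)) - E - β * V k E α β δ (s+1) (k*s+1+cN) := by
      intro δ
      rw [g_succ, hb1', hbk', if_pos (by omega : 1 ≤ b)]
    have hls : IsLeast {δ : ℝ | 0 ≤ g k E α β δ (s+2) b} δs := by
      constructor
      · -- δs is in the set : g at δs is ≥ 0
        simp only [Set.mem_setOf_eq]
        rw [hgrw δs]
        -- lower bound for V at b-1
        have h1 := L5 k hk E α β δs hβ0' s (cN+k-1) 0 (by omega) (by omega)
        have hrr : rho k (cN+k-1) 0 = cN := by simp only [rho]; omega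
        rw [hrr, Sg_zero] at h1
        -- upper bound for V at b-k
        obtain ⟨j, hj, h2⟩ := L3 k hk E α β δs hδsE hβ0' hβ1' s cN (by omega)
        have h3 : (δs - E) * Sg β j ≤ β ^ s * α * (rho k cN j : ℝ) ^ 2 := by
          have := term_le k cN hc1 hck α β hα' hβ0' hβ1' s j
          calc (δs - E) * Sg β j = (β^(s+1)*α*(cN:ℝ)^2) * Sg β j := by rw [hδs]; ring
            _ ≤ β ^ s * α * (rho k cN j : ℝ) ^ 2 := this
        have h2' : V k E α β δs (s+1) (k*s+1+cN) ≤ E * Sg β (s+1) := by linarith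
        have hm1 := mul_le_mul_of_nonneg_left h1 hβ0'
        have hm2 := mul_le_mul_of_nonneg_left h2' hβ0'
        have hps : β * (β ^ s * α * (cN:ℝ)^2) = β^(s+1) * α * (cN:ℝ)^2 := by
          rw [pow_succ]; ring
        rw [hδs]
        nlinarith [hm1, hm2]
      · -- lower bound
        intro δ hδmem
        simp only [Set.mem_setOf_eq] at hδmem
        by_contra hlt
        push_neg at hlt
        rw [hgrw δ] at hδmem
        rcases le_or_gt E δ with hEδ | hEδ
        · -- E ≤ δ < δs
          obtain ⟨j, hj, h1⟩ := L3 k hk E α β δ hEδ hβ0' hβ1' s (cN+k-1) (by omega)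
          have h2 := L5 k hk E α β δ hβ0' s cN j (by omega) hj
          have hgap := gapN k cN hk hc1 hck j
          have hgapR : ((rho k cN j:ℕ):ℝ)^2 + ((cN:ℕ):ℝ)^2 ≤ ((rho k (cN+k-1) j:ℕ):ℝ)^2 := by
            exact_mod_cast hgap
          have hm1 := mul_le_mul_of_nonneg_left h1 hβ0'
          have hm2 := mul_le_mul_of_nonneg_left h2 hβ0'
          have hδlt : δ < E + β^(s+1) * α * (cN:ℝ)^2 := hlt
          have hps : β^(s+1) = β * β^s := by rw [pow_succ]; ring
          rw [hps] at hδlt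
          have h0 : (0:ℝ) ≤ β*(β^s*α) := by positivity
          have hq := mul_le_mul_of_nonneg_left hgapR h0
          have hq' : β*(β^s*α*(rho k cN j:ℝ)^2) + β*(β^s*α)*(cN:ℝ)^2
              ≤ β*(β^s*α*(rho k (cN+k-1) j:ℝ)^2) := by nlinarith [hq]
          linarith [hm1, hm2, hδmem, hδlt, hq']
        · -- δ < E
          have hmono := Vmono k hk E α β δ hα' hβ0' s (k*s+1+cN) (k*s+1+(cN+k-1))
            (by omega) (by omega)
          have hm := mul_le_mul_of_nonneg_left hmono hβ0'
          linarith
    rw [hls.csInf_eq]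
    have hc : ((cN:ℕ):ℝ) = ((b:ℕ):ℝ) - (k:ℝ) * (((s+2:ℕ)):ℝ) + (k:ℝ) - 1 := by
      rw [hbN]; push_cast; ring
    rw [show ((s+2:ℕ) - 1) = s+1 from rfl]
    rw [hδs, ← hc]
end
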